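/- Direct-sum inequality for the geometric Rényi relative entropy: for every α > 1 and classical–quantum operators κ = ∑_x p(x)|x⟩⟨x|⊗κ_x (a state) and λ = ∑_x q(x)|x⟩⟨x|⊗λ_x (positive semidefinite), one has D̂_α(κ‖λ) ≥ D(p‖q) + ∑_x p(x) D̂_α(κ_x‖λ_x). -/

import Mathlib

open scoped Matrix Classical ComplexOrder

set_option linter.unusedSectionVars false

namespace RainsPaper

/-- Natural matrix logarithm of a Hermitian matrix via spectral decomposition
(with the convention `log 0 = 0` on the kernel); junk value `0` otherwise. -/
noncomputable def matLog {n : Type} [Fintype n] [DecidableEq n] (A : Matrix n n ℂ) :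
    Matrix n n ℂ :=
  if hA : A.IsHermitian then
    (hA.eigenvectorUnitary : Matrix n n ℂ) *
      (Matrix.diagonal fun i => (Real.log (hA.eigenvalues i) : ℂ)) *
      (star (hA.eigenvectorUnitary : Matrix n n ℂ))
  else 0

/-- Real power of a Hermitian matrix via spectral decomposition (with the convention
`0 ^ r = 0` for `r ≠ 0`, so negative powers are taken on the support);
junk value `0` otherwise. -/
noncomputable def matPow {n : Type} [Fintype n] [DecidableEq n] (A : Matrix n n ℂ) (r : ℝ) :
    Matrix n n ℂ :=
  if hA : A.IsHermitian then
    (hA.eigenvectorUnitary : Matrix n n ℂ) *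
      (Matrix.diagonal fun i => ((hA.eigenvalues i ^ r : ℝ) : ℂ)) *
      (star (hA.eigenvectorUnitary : Matrix n n ℂ))
  else 0

/-- A state is a positive semidefinite operator with unit trace. -/
def IsState {n : Type} [Fintype n] (ρ : Matrix n n ℂ) : Prop :=
  ρ.PosSemidef ∧ ρ.trace = 1

/-- `supp ω ⊆ supp τ`, expressed (for Hermitian matrices) as `ker τ ⊆ ker ω`. -/
def SuppSubset {n : Type} [Fintype n] (ω τ : Matrix n n ℂ) : Prop :=
  ∀ v : n → ℂ, τ.mulVec v = 0 → ω.mulVec v = 0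

/-- Trace norm `‖X‖₁ = Tr √(X†X)`. -/
noncomputable def traceNorm {n : Type} [Fintype n] [DecidableEq n] (X : Matrix n n ℂ) : ℝ :=
  ((matPow (Xᴴ * X) 2⁻¹).trace).re

/-- Fidelity `F(ω,τ) = ‖√ω √τ‖₁²`. -/
noncomputable def fidelity {n : Type} [Fintype n] [DecidableEq n] (ω τ : Matrix n n ℂ) : ℝ :=
  (traceNorm (matPow ω 2⁻¹ * matPow τ 2⁻¹)) ^ 2

/-- Extended base-2 logarithm: `elog2 x = log₂ x` for `x > 0` and `-∞` for `x ≤ 0`. -/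
noncomputable def elog2 (x : ℝ) : EReal :=
  if x ≤ 0 then ⊥ else ((Real.logb 2 x : ℝ) : EReal)

/-- Quantum relative entropy `D(ω‖τ) = Tr[ω (log₂ ω - log₂ τ)]` if `supp ω ⊆ supp τ`,
and `+∞` otherwise. -/
noncomputable def qRelEnt {n : Type} [Fintype n] [DecidableEq n] (ω τ : Matrix n n ℂ) : EReal :=
  if SuppSubset ω τ then
    ((((ω * (matLog ω - matLog τ)).trace).re / Real.log 2 : ℝ) : EReal)
  else ⊤

/-- Sandwiched Rényi relative entropy
`D̃_α(ω‖τ) = (α-1)⁻¹ log₂ Tr[(τ^{(1-α)/(2α)} ω τ^{(1-α)/(2α)})^α]` when `α ∈ (0,1)`, or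
`α > 1` and `supp ω ⊆ supp τ`; `+∞` otherwise. -/
noncomputable def sandRenyi {n : Type} [Fintype n] [DecidableEq n] (α : ℝ)
    (ω τ : Matrix n n ℂ) : EReal :=
  if (0 < α ∧ α < 1) ∨ (1 < α ∧ SuppSubset ω τ) then
    (((α - 1)⁻¹ : ℝ) : EReal) *
      elog2 (((matPow (matPow τ ((1 - α) / (2 * α)) * ω * matPow τ ((1 - α) / (2 * α))) α).trace).re)
  else ⊤

/-- Petz Rényi relative entropy `D_α(ω‖τ) = (α-1)⁻¹ log₂ Tr[ω^α τ^{1-α}]` when `α ∈ (0,1)`,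
or `α > 1` and `supp ω ⊆ supp τ`; `+∞` otherwise. -/
noncomputable def petzRenyi {n : Type} [Fintype n] [DecidableEq n] (α : ℝ)
    (ω τ : Matrix n n ℂ) : EReal :=
  if (0 < α ∧ α < 1) ∨ (1 < α ∧ SuppSubset ω τ) then
    (((α - 1)⁻¹ : ℝ) : EReal) * elog2 (((matPow ω α * matPow τ (1 - α)).trace).re)
  else ⊤

/-- Geometric Rényi relative entropy `D̂_α(ω‖τ) = (α-1)⁻¹ log₂ Tr[τ (τ^{-1/2} ω τ^{-1/2})^α]`
(inverses on the support) when `α ∈ (0,1)`, or `α > 1` and `supp ω ⊆ supp τ`; `+∞` otherwise. -/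
noncomputable def geomRenyi {n : Type} [Fintype n] [DecidableEq n] (α : ℝ)
    (ω τ : Matrix n n ℂ) : EReal :=
  if (0 < α ∧ α < 1) ∨ (1 < α ∧ SuppSubset ω τ) then
    (((α - 1)⁻¹ : ℝ) : EReal) *
      elog2 (((τ * matPow (matPow τ (-2⁻¹) * ω * matPow τ (-2⁻¹)) α).trace).re)
  else ⊤

/-- Classical relative entropy `D(p‖q)`, equal to `+∞` unless `supp p ⊆ supp q`
(terms with `p x = 0` contribute zero). -/
noncomputable def cRelEnt {X : Type} [Fintype X] (p q : X → ℝ) : EReal :=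
  if ∀ x, p x ≠ 0 → q x ≠ 0 then
    ((∑ x, p x * Real.logb 2 (p x / q x) : ℝ) : EReal)
  else ⊤

/-- `p` is a probability distribution on the finite set `X`. -/
def IsProb {X : Type} [Fintype X] (p : X → ℝ) : Prop :=
  (∀ x, 0 ≤ p x) ∧ ∑ x, p x = 1

/-- The classical–quantum operator `∑ x p(x) |x⟩⟨x| ⊗ K x`. -/
noncomputable def cqOp {X A : Type} [DecidableEq X] (p : X → ℝ)
    (K : X → Matrix A A ℂ) : Matrix (X × A) (X × A) ℂ :=
  Matrix.of fun a b => if a.1 = b.1 then (p a.1 : ℂ) * K a.1 a.2 b.2 else 0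

/-- Partial transpose (on the second tensor factor):
`(id ⊗ T)(X)_{(i,k),(j,l)} = X_{(i,l),(j,k)}`. -/
def ptrans {a b : Type} (X : Matrix (a × b) (a × b) ℂ) : Matrix (a × b) (a × b) ℂ :=
  Matrix.of fun p q => X (p.1, q.2) (q.1, p.2)

/-- The partial transpose as a linear map. -/
def ptransL {a b : Type} : Matrix (a × b) (a × b) ℂ →ₗ[ℂ] Matrix (a × b) (a × b) ℂ where
  toFun := ptrans
  map_add' _ _ := rfl
  map_smul' _ _ := rfl

/-- `PPT'` : positive semidefinite bipartite operators whose partial transpose has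
trace norm at most 1. -/
def PPTprime {a b : Type} [Fintype a] [Fintype b] [DecidableEq a] [DecidableEq b]
    (σ : Matrix (a × b) (a × b) ℂ) : Prop :=
  σ.PosSemidef ∧ traceNorm (ptrans σ) ≤ 1

/-- The Rains relative entropy `R(ρ) = inf_{σ ∈ PPT'} D(ρ‖σ)`. -/
noncomputable def Rains {a b : Type} [Fintype a] [Fintype b] [DecidableEq a] [DecidableEq b]
    (ρ : Matrix (a × b) (a × b) ℂ) : EReal :=
  ⨅ σ : {σ : Matrix (a × b) (a × b) ℂ // PPTprime σ}, qRelEnt ρ σ.1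

/-- The sandwiched Rényi Rains relative entropy `R̃_α(ρ) = inf_{σ ∈ PPT'} D̃_α(ρ‖σ)`. -/
noncomputable def sandRains {a b : Type} [Fintype a] [Fintype b] [DecidableEq a] [DecidableEq b]
    (α : ℝ) (ρ : Matrix (a × b) (a × b) ℂ) : EReal :=
  ⨅ σ : {σ : Matrix (a × b) (a × b) ℂ // PPTprime σ}, sandRenyi α ρ σ.1

/-- The extension `id_{Fin k} ⊗ Φ` of a linear map on matrices. -/
def matExt {n m : Type} [Fintype n] [Fintype m]
    (Φ : Matrix n n ℂ →ₗ[ℂ] Matrix m m ℂ) (k : ℕ)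
    (X : Matrix (Fin k × n) (Fin k × n) ℂ) : Matrix (Fin k × m) (Fin k × m) ℂ :=
  Matrix.of fun p q => Φ (Matrix.of fun i j => X (p.1, i) (q.1, j)) p.2 q.2

/-- Complete positivity: all extensions `id_k ⊗ Φ` preserve positive semidefiniteness. -/
def IsCP {n m : Type} [Fintype n] [Fintype m]
    (Φ : Matrix n n ℂ →ₗ[ℂ] Matrix m m ℂ) : Prop :=
  ∀ (k : ℕ) (X : Matrix (Fin k × n) (Fin k × n) ℂ), X.PosSemidef → (matExt Φ k X).PosSemidef

/-- Trace preservation. -/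
def IsTP {n m : Type} [Fintype n] [Fintype m]
    (Φ : Matrix n n ℂ →ₗ[ℂ] Matrix m m ℂ) : Prop :=
  ∀ X : Matrix n n ℂ, (Φ X).trace = X.trace

/-- A selective PPT operation: a family of completely positive maps `P x` such that
`(id ⊗ T) ∘ P x ∘ (id ⊗ T)` is completely positive for every `x` and `∑ x, P x` is
trace preserving. -/
def IsSelectivePPT {a b a' b' X : Type} [Fintype a] [Fintype b] [Fintype a'] [Fintype b']
    [Fintype X]
    (P : X → (Matrix (a × b) (a × b) ℂ →ₗ[ℂ] Matrix (a' × b') (a' × b') ℂ)) : Prop :=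
  (∀ x, IsCP (P x)) ∧ (∀ x, IsCP (ptransL ∘ₗ P x ∘ₗ ptransL)) ∧
    (∀ ρ : Matrix (a × b) (a × b) ℂ, ∑ x, ((P x) ρ).trace = ρ.trace)

/-- The maximally entangled state `Φ^d = |Φ^d⟩⟨Φ^d|`, `|Φ^d⟩ = d^{-1/2} ∑ i |i⟩|i⟩`. -/
noncomputable def maxEnt (d : ℕ) : Matrix (Fin d × Fin d) (Fin d × Fin d) ℂ :=
  Matrix.of fun p q => if p.1 = p.2 ∧ q.1 = q.2 then ((d : ℂ))⁻¹ else 0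

/-- Binary entropy `h₂(ε) = -ε log₂ ε - (1-ε) log₂ (1-ε)`. -/
noncomputable def h2 (ε : ℝ) : ℝ :=
  -ε * Real.logb 2 ε - (1 - ε) * Real.logb 2 (1 - ε)



variable {n : Type} [Fintype n] [DecidableEq n]

lemma conj_pow (V M : Matrix n n ℂ) (hV : star V * V = 1) (k : ℕ) :
    (V * M * star V) ^ k = V * M ^ k * star V ∨ k = 0 := by
  rcases Nat.eq_zero_or_pos k with h | h
  · exact Or.inr h
  · left
    induction k with
    | zero => simp at h
    | succ m ih =>
      rcases Nat.eq_zero_or_pos m with hm | hm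
      · subst hm; simp
      · rw [pow_succ, pow_succ, ih hm]
        rw [show V * M ^ m * star V * (V * M * star V) = V * M ^ m * (star V * V) * M * star V by
          noncomm_ring]
        rw [hV, mul_one, mul_assoc (V * M ^ m)]
        noncomm_ring

lemma aeval_conj (V M : Matrix n n ℂ) (hV : star V * V = 1) (hV' : V * star V = 1)
    (g : Polynomial ℂ) :
    Polynomial.aeval (V * M * star V) g = V * Polynomial.aeval M g * star V := by
  rw [Polynomial.aeval_eq_sum_range (x := V * M * star V), Polynomial.aeval_eq_sum_range (x := M)]
  rw [Matrix.mul_sum, Matrix.sum_mul]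
  refine Finset.sum_congr rfl fun k _ => ?_
  rcases conj_pow V M hV k with h | h
  · rw [h, Matrix.mul_smul, Matrix.smul_mul]
  · subst h
    simp only [pow_zero]
    rw [Matrix.mul_smul, Matrix.smul_mul, mul_one, hV']

lemma aeval_diagonal (c : n → ℂ) (g : Polynomial ℂ) :
    Polynomial.aeval (Matrix.diagonal c) g
      = Matrix.diagonal (fun i => Polynomial.eval (c i) g) := by
  rw [Polynomial.aeval_eq_sum_range (x := Matrix.diagonal c)]
  have hdp : ∀ k : ℕ, (Matrix.diagonal c) ^ k = Matrix.diagonal (fun i => c i ^ k) := by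
    intro k; rw [Matrix.diagonal_pow]; rfl
  ext i j
  rcases eq_or_ne i j with rfl | hij
  · simp only [Matrix.sum_apply, hdp, Matrix.smul_apply, Matrix.diagonal_apply_eq,
      smul_eq_mul]
    rw [Polynomial.eval_eq_sum_range]
  · simp [Matrix.sum_apply, hdp, Matrix.diagonal_apply_ne _ hij, hij]

/-- Key: matPow is independent of the chosen unitary diagonalization. -/
lemma matPow_spec {A : Matrix n n ℂ} (hA : A.IsHermitian) (V : Matrix n n ℂ)
    (hV : star V * V = 1) (hV' : V * star V = 1) (d : n → ℝ)
    (hdec : A = V * Matrix.diagonal (fun i => (d i : ℂ)) * star V) (r : ℝ) :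
    matPow A r = V * Matrix.diagonal (fun i => ((d i ^ r : ℝ) : ℂ)) * star V := by
  rw [matPow, dif_pos hA]
  set W : Matrix n n ℂ := (hA.eigenvectorUnitary : Matrix n n ℂ) with hW
  have hW1 : star W * W = 1 := Unitary.coe_star_mul_self hA.eigenvectorUnitary
  have hW2 : W * star W = 1 := Unitary.coe_mul_star_self hA.eigenvectorUnitary
  set e : n → ℝ := hA.eigenvalues with he
  have hdecW : A = W * Matrix.diagonal (fun i => (e i : ℂ)) * star W := by
    have := hA.spectral_theorem; rw [Unitary.conjStarAlgAut_apply] at this; exact this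
  -- interpolation polynomial
  set s : Finset ℝ := (Finset.image d Finset.univ) ∪ (Finset.image e Finset.univ) with hs
  set g : Polynomial ℝ := Lagrange.interpolate s id (fun t => t ^ r) with hg
  have hgev : ∀ t ∈ s, Polynomial.eval t g = t ^ r := by
    intro t ht
    exact Lagrange.eval_interpolate_at_node _ (Set.injOn_id _) ht
  set G : Polynomial ℂ := g.map (algebraMap ℝ ℂ) with hG
  have hGev : ∀ t ∈ s, Polynomial.eval ((t : ℂ)) G = ((t ^ r : ℝ) : ℂ) := by
    intro t ht
    rw [hG, Polynomial.eval_map, ← Complex.coe_algebraMap, Polynomial.eval₂_at_apply,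
      hgev t ht, Complex.coe_algebraMap]
  have hd : ∀ i, d i ∈ s := fun i => Finset.mem_union_left _ (Finset.mem_image_of_mem _ (Finset.mem_univ i))
  have he' : ∀ i, e i ∈ s := fun i => Finset.mem_union_right _ (Finset.mem_image_of_mem _ (Finset.mem_univ i))
  have h1 : Polynomial.aeval A G = W * Matrix.diagonal (fun i => ((e i ^ r : ℝ) : ℂ)) * star W := by
    rw [hdecW, aeval_conj _ _ hW1 hW2, aeval_diagonal]
    have : (fun i => Polynomial.eval ((e i : ℂ)) G) = fun i => ((e i ^ r : ℝ) : ℂ) :=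
      funext fun i => hGev _ (he' i)
    rw [this]
  have h2 : Polynomial.aeval A G = V * Matrix.diagonal (fun i => ((d i ^ r : ℝ) : ℂ)) * star V := by
    rw [hdec, aeval_conj _ _ hV hV', aeval_diagonal]
    have : (fun i => Polynomial.eval ((d i : ℂ)) G) = fun i => ((d i ^ r : ℝ) : ℂ) :=
      funext fun i => hGev _ (hd i)
    rw [this]
  rw [← h1, h2]


lemma herm_of_decomp (V : Matrix n n ℂ) (d : n → ℝ) :
    (V * Matrix.diagonal (fun i => (d i : ℂ)) * star V).IsHermitian := by
  unfold Matrix.IsHermitian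
  rw [Matrix.star_eq_conjTranspose, Matrix.conjTranspose_mul, Matrix.conjTranspose_mul,
    Matrix.conjTranspose_conjTranspose, Matrix.diagonal_conjTranspose]
  have : (star fun i => ((d i : ℂ))) = fun i => ((d i : ℂ)) := by
    funext i; simp [Complex.conj_ofReal]
  rw [this, mul_assoc]

lemma psd_of_decomp (V : Matrix n n ℂ) (d : n → ℝ) (hd : ∀ i, 0 ≤ d i) :
    (V * Matrix.diagonal (fun i => (d i : ℂ)) * star V).PosSemidef := by
  have hD : (Matrix.diagonal (fun i => (d i : ℂ))).PosSemidef := by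
    exact Matrix.PosSemidef.diagonal (fun i => Complex.zero_le_real.mpr (hd i))
  have := hD.mul_mul_conjTranspose_same V
  rwa [Matrix.star_eq_conjTranspose]

lemma matPow_posSemidef {A : Matrix n n ℂ} (hA : A.PosSemidef) (r : ℝ) :
    (matPow A r).PosSemidef := by
  rw [matPow, dif_pos hA.1]
  exact psd_of_decomp _ _ (fun i => Real.rpow_nonneg (hA.eigenvalues_nonneg i) r)

lemma matPow_isHermitian {A : Matrix n n ℂ} (hA : A.IsHermitian) (r : ℝ) :
    (matPow A r).IsHermitian := by
  rw [matPow, dif_pos hA]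
  exact herm_of_decomp _ _

lemma smul_decomp (V : Matrix n n ℂ) (c : ℝ) (d : n → ℝ) :
    (c : ℂ) • (V * Matrix.diagonal (fun i => (d i : ℂ)) * star V)
      = V * Matrix.diagonal (fun i => ((c * d i : ℝ) : ℂ)) * star V := by
  rw [← Matrix.smul_mul, ← Matrix.mul_smul]
  congr 2
  ext i j
  rcases eq_or_ne i j with rfl | h
  · simp [Matrix.smul_apply]
  · simp [Matrix.diagonal_apply_ne _ h, Matrix.smul_apply]

lemma matPow_smul {A : Matrix n n ℂ} (hA : A.PosSemidef) {c : ℝ} (hc : 0 ≤ c) (r : ℝ) :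
    matPow ((c : ℂ) • A) r = ((c ^ r : ℝ) : ℂ) • matPow A r := by
  have hW1 : star (hA.1.eigenvectorUnitary : Matrix n n ℂ) * _ = 1 :=
    Unitary.coe_star_mul_self hA.1.eigenvectorUnitary
  have hW2 : (hA.1.eigenvectorUnitary : Matrix n n ℂ) * star _ = 1 :=
    Unitary.coe_mul_star_self hA.1.eigenvectorUnitary
  have hspec : A = (hA.1.eigenvectorUnitary : Matrix n n ℂ)
      * Matrix.diagonal (fun i => ((hA.1.eigenvalues i : ℝ) : ℂ))
      * star (hA.1.eigenvectorUnitary : Matrix n n ℂ) := by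
    have := hA.1.spectral_theorem; rw [Unitary.conjStarAlgAut_apply] at this; exact this
  have hdec : (c : ℂ) • A = (hA.1.eigenvectorUnitary : Matrix n n ℂ)
      * Matrix.diagonal (fun i => ((c * hA.1.eigenvalues i : ℝ) : ℂ))
      * star (hA.1.eigenvectorUnitary : Matrix n n ℂ) := by
    conv_lhs => rw [hspec]
    exact smul_decomp _ _ _
  have hherm : ((c : ℂ) • A).IsHermitian := by rw [hdec]; exact herm_of_decomp _ _
  rw [matPow_spec hherm _ hW1 hW2 _ hdec r,
    matPow_spec hA.1 _ hW1 hW2 _ hspec r]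
  have : (fun i => (((c * hA.1.eigenvalues i) ^ r : ℝ) : ℂ))
      = fun i => ((c ^ r : ℝ) : ℂ) * (((hA.1.eigenvalues i ^ r : ℝ)) : ℂ) := by
    funext i
    rw [Real.mul_rpow hc (hA.eigenvalues_nonneg i)]
    push_cast
    ring
  rw [this]
  rw [show Matrix.diagonal (fun i => ((c ^ r : ℝ) : ℂ) * (((hA.1.eigenvalues i ^ r : ℝ)) : ℂ))
      = ((c ^ r : ℝ) : ℂ) • Matrix.diagonal (fun i => (((hA.1.eigenvalues i ^ r : ℝ)) : ℂ)) by
    ext i j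
    rcases eq_or_ne i j with rfl | h
    · simp [Matrix.smul_apply]
    · simp [Matrix.diagonal_apply_ne _ h, Matrix.smul_apply]]
  rw [Matrix.mul_smul, Matrix.smul_mul]


section BD

variable {X B : Type} [Fintype X] [DecidableEq X] [Fintype B] [DecidableEq B]

/-- Block-diagonal matrix over the product index. -/
def bd (M : X → Matrix B B ℂ) : Matrix (X × B) (X × B) ℂ :=
  Matrix.of fun a b => if a.1 = b.1 then M a.1 a.2 b.2 else 0

lemma bd_congr {M N : X → Matrix B B ℂ} (h : ∀ x, M x = N x) : bd M = bd N := by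
  have : M = N := funext h
  rw [this]

lemma bd_mul (M N : X → Matrix B B ℂ) : bd M * bd N = bd (fun x => M x * N x) := by
  ext a b
  simp only [Matrix.mul_apply, bd, Matrix.of_apply, Fintype.sum_prod_type]
  rcases eq_or_ne a.1 b.1 with h | h
  · rw [if_pos h]
    rw [Finset.sum_eq_single a.1]
    · simp [h, Matrix.mul_apply]
    · intro z _ hz
      simp [Ne.symm hz]
    · simp
  · rw [if_neg h]
    apply Finset.sum_eq_zero
    intro z _
    apply Finset.sum_eq_zero
    intro c _
    rcases eq_or_ne a.1 z with rfl | hz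
    · simp [h]
    · simp [hz]

lemma bd_star (M : X → Matrix B B ℂ) : star (bd M) = bd (fun x => star (M x)) := by
  ext a b
  simp only [Matrix.star_eq_conjTranspose, Matrix.conjTranspose_apply, bd, Matrix.of_apply]
  rcases eq_or_ne a.1 b.1 with h | h
  · rw [if_pos h.symm, if_pos h, h]
  · rw [if_neg (Ne.symm h), if_neg h, star_zero]

lemma bd_one : bd (fun _ : X => (1 : Matrix B B ℂ)) = 1 := by
  ext a b
  simp only [bd, Matrix.of_apply, Matrix.one_apply, Prod.ext_iff]
  rcases eq_or_ne a.1 b.1 with h | h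
  · simp [h]
  · simp [h]

lemma bd_trace (M : X → Matrix B B ℂ) : (bd M).trace = ∑ x, (M x).trace := by
  simp [Matrix.trace, Matrix.diag, bd, Fintype.sum_prod_type]

lemma bd_diagonal (f : X → B → ℝ) :
    bd (fun x => Matrix.diagonal (fun i => ((f x i : ℝ) : ℂ)))
      = Matrix.diagonal (fun p : X × B => ((f p.1 p.2 : ℝ) : ℂ)) := by
  ext a b
  simp only [bd, Matrix.of_apply]
  rcases eq_or_ne a b with rfl | hab
  · simp
  · rcases eq_or_ne a.1 b.1 with h | h
    · have hab2 : a.2 ≠ b.2 := fun h2 => hab (Prod.ext h h2)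
      rw [if_pos h, Matrix.diagonal_apply_ne _ hab]
      rw [h, Matrix.diagonal_apply_ne _ hab2]
    · rw [if_neg h, Matrix.diagonal_apply_ne _ hab]

lemma bd_isHermitian {M : X → Matrix B B ℂ} (h : ∀ x, (M x).IsHermitian) :
    (bd M).IsHermitian := by
  unfold Matrix.IsHermitian
  rw [← Matrix.star_eq_conjTranspose, bd_star]
  exact bd_congr fun x => h x

lemma matPow_bd {M : X → Matrix B B ℂ} (hM : ∀ x, (M x).IsHermitian) (r : ℝ) :
    matPow (bd M) r = bd (fun x => matPow (M x) r) := by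
  set W : X → Matrix B B ℂ := fun x => ((hM x).eigenvectorUnitary : Matrix B B ℂ) with hWdef
  have hW1 : ∀ x, star (W x) * W x = 1 := fun x =>
    Unitary.coe_star_mul_self (hM x).eigenvectorUnitary
  have hW2 : ∀ x, W x * star (W x) = 1 := fun x =>
    Unitary.coe_mul_star_self (hM x).eigenvectorUnitary
  have hspec : ∀ x, M x = W x * Matrix.diagonal (fun i => (((hM x).eigenvalues i : ℝ) : ℂ))
      * star (W x) := fun x => by
      have := (hM x).spectral_theorem; rw [Unitary.conjStarAlgAut_apply] at this; exact this
  have hbW1 : star (bd W) * bd W = 1 := by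
    rw [bd_star, bd_mul, bd_congr hW1, bd_one]
  have hbW2 : bd W * star (bd W) = 1 := by
    rw [bd_star, bd_mul, bd_congr hW2, bd_one]
  have hdec : bd M = bd W * Matrix.diagonal
      (fun p : X × B => (((hM p.1).eigenvalues p.2 : ℝ) : ℂ)) * star (bd W) := by
    rw [← bd_diagonal (fun x i => (hM x).eigenvalues i), bd_star, bd_mul, bd_mul]
    exact bd_congr hspec
  rw [matPow_spec (bd_isHermitian hM) _ hbW1 hbW2 _ hdec r]
  rw [show (fun p : X × B => ((((hM p.1).eigenvalues p.2) ^ r : ℝ) : ℂ))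
      = fun p : X × B => (((fun x i => ((hM x).eigenvalues i) ^ r) p.1 p.2 : ℝ) : ℂ) from rfl]
  rw [← bd_diagonal (fun x i => ((hM x).eigenvalues i) ^ r), bd_star, bd_mul, bd_mul]
  refine bd_congr fun x => ?_
  rw [matPow_spec (hM x) _ (hW1 x) (hW2 x) _ (hspec x) r]

end BD


section Helers

variable {n : Type} [Fintype n] [DecidableEq n]

lemma posSemidef_smul {A : Matrix n n ℂ} (hA : A.PosSemidef) {c : ℝ} (hc : 0 ≤ c) :
    ((c : ℂ) • A).PosSemidef := by
  refine Matrix.PosSemidef.of_dotProduct_mulVec_nonneg ?_ ?_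
  · unfold Matrix.IsHermitian
    rw [Matrix.conjTranspose_smul, hA.1.eq]
    congr 1
    simp [Complex.conj_ofReal]
  · intro v
    rw [Matrix.smul_mulVec, dotProduct_smul, smul_eq_mul]
    exact mul_nonneg (Complex.zero_le_real.mpr hc) (hA.dotProduct_mulVec_nonneg v)

lemma posSemidef_trace_nonneg {A : Matrix n n ℂ} (hA : A.PosSemidef) : 0 ≤ A.trace := by
  rw [Matrix.trace]
  apply Finset.sum_nonneg
  intro i _
  have h := hA.dotProduct_mulVec_nonneg (Pi.single i 1)
  have heq : dotProduct (star ((Pi.single i 1 : n → ℂ))) (A *ᵥ (Pi.single i 1 : n → ℂ)) = A.diag i := by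
    have : star ((Pi.single i 1 : n → ℂ)) = (Pi.single i 1 : n → ℂ) := by
      funext k
      rcases eq_or_ne k i with rfl | hk
      · simp
      · simp [Pi.single_apply, hk]
    rw [this, single_dotProduct]
    simp [Matrix.mulVec_single, Matrix.diag]
  rwa [heq] at h

open scoped MatrixOrder in
lemma trace_mul_psd_nonneg {A B : Matrix n n ℂ} (hA : A.PosSemidef) (hB : B.PosSemidef) :
    0 ≤ (A * B).trace := by
  have h1 : A * B = CFC.sqrt A * (CFC.sqrt A * B) := by
    rw [← mul_assoc, CFC.sqrt_mul_sqrt_self A hA.nonneg]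
  rw [h1, Matrix.trace_mul_comm, mul_assoc]
  have hh : CFC.sqrt A * B * CFC.sqrt A = (CFC.sqrt A)ᴴ * B * CFC.sqrt A := by
    rw [(Matrix.nonneg_iff_posSemidef.mp (CFC.sqrt_nonneg A)).1.eq]
  rw [← mul_assoc, hh]
  exact posSemidef_trace_nonneg (hB.conjTranspose_mul_mul_same _)

end Helers

section CQ

variable {X B : Type} [Fintype X] [DecidableEq X] [Fintype B] [DecidableEq B]

lemma cqOp_eq_bd (p : X → ℝ) (K : X → Matrix B B ℂ) :
    cqOp p K = bd (fun x => (p x : ℂ) • K x) := by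
  ext a b
  simp [cqOp, bd, Matrix.smul_apply, smul_eq_mul]

lemma bd_mulVec_embed (M : X → Matrix B B ℂ) (x0 : X) (v : B → ℂ) :
    (bd M) *ᵥ (fun pr : X × B => if pr.1 = x0 then v pr.2 else 0)
      = fun pr : X × B => if pr.1 = x0 then (M x0 *ᵥ v) pr.2 else 0 := by
  funext pr
  simp only [Matrix.mulVec, dotProduct, bd, Matrix.of_apply, Fintype.sum_prod_type]
  rcases eq_or_ne pr.1 x0 with h | h
  · rw [if_pos h]
    rw [Finset.sum_eq_single pr.1]
    · simp [h, Matrix.mulVec, dotProduct]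
    · intro z _ hz
      apply Finset.sum_eq_zero
      intro c _
      simp [Ne.symm hz]
    · simp
  · rw [if_neg h]
    apply Finset.sum_eq_zero
    intro z _
    apply Finset.sum_eq_zero
    intro c _
    rcases eq_or_ne pr.1 z with rfl | hz
    · simp [h]
    · simp [hz]

lemma supp_transfer {p q : X → ℝ} {κ lam : X → Matrix B B ℂ}
    (hsupp : SuppSubset (cqOp p κ) (cqOp q lam)) (x0 : X) (v : B → ℂ)
    (hv : ((q x0 : ℂ) • lam x0) *ᵥ v = 0) : ((p x0 : ℂ) • κ x0) *ᵥ v = 0 := by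
  have hw : (cqOp q lam) *ᵥ (fun pr : X × B => if pr.1 = x0 then v pr.2 else 0) = 0 := by
    rw [cqOp_eq_bd, bd_mulVec_embed]
    funext pr
    rcases eq_or_ne pr.1 x0 with h | h
    · rw [if_pos h]
      rw [show ((q x0 : ℂ) • lam x0) *ᵥ v = 0 from hv]
      rfl
    · rw [if_neg h]; rfl
  have := hsupp _ hw
  rw [cqOp_eq_bd, bd_mulVec_embed] at this
  funext a
  have h2 := congrFun this (x0, a)
  simpa using h2

end CQ



/-- Direct-sum inequality for the geometric Rényi relative entropy:
for every `α > 1` and classical–quantum `κ`, `λ`,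
`D̂_α(κ‖λ) ≥ D(p‖q) + ∑ x p(x) D̂_α(κ_x‖λ_x)`. -/
theorem geomRenyi_directSum {X A : Type} [Fintype X] [DecidableEq X] [Fintype A] [DecidableEq A]
    (α : ℝ) (hα : 1 < α)
    (p q : X → ℝ) (κ lam : X → Matrix A A ℂ)
    (hp : IsProb p) (hκ : ∀ x, IsState (κ x))
    (hq : ∀ x, 0 ≤ q x) (hlam : ∀ x, (lam x).PosSemidef) :
    geomRenyi α (cqOp p κ) (cqOp q lam) ≥
      cRelEnt p q + ∑ x, (p x : EReal) * geomRenyi α (κ x) (lam x) := by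
  by_cases hsupp : SuppSubset (cqOp p κ) (cqOp q lam)
  case neg =>
    rw [geomRenyi, if_neg]
    · exact le_top
    · rintro (⟨_, h1⟩ | ⟨_, h2⟩)
      · linarith
      · exact hsupp h2
  case pos =>
  have hαpos : (0:ℝ) < α := by linarith
  have hαne : α ≠ 0 := ne_of_gt hαpos
  have hα1 : (0:ℝ) < α - 1 := by linarith
  -- support relations between blocks
  have hpq : ∀ x, p x ≠ 0 → q x ≠ 0 := by
    intro x hx hqx
    have hker : ∀ v : A → ℂ, κ x *ᵥ v = 0 := by
      intro v
      have h0 : ((q x : ℂ) • lam x) *ᵥ v = 0 := by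
        rw [hqx]; simp
      have h1 := supp_transfer hsupp x v h0
      rw [Matrix.smul_mulVec] at h1
      have hpx : (p x : ℂ) ≠ 0 := by exact_mod_cast hx
      exact (smul_eq_zero.mp h1).resolve_left hpx
    have hzero : κ x = 0 := by
      ext i j
      have := congrFun (hker (Pi.single j 1)) i
      simpa [Matrix.mulVec_single] using this
    have := (hκ x).2
    rw [hzero] at this
    simp at this
  have hsub : ∀ x, p x ≠ 0 → SuppSubset (κ x) (lam x) := by
    intro x hx v hv
    have h0 : ((q x : ℂ) • lam x) *ᵥ v = 0 := by
      rw [Matrix.smul_mulVec, hv, smul_zero]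
    have h1 := supp_transfer hsupp x v h0
    rw [Matrix.smul_mulVec] at h1
    have hpx : (p x : ℂ) ≠ 0 := by exact_mod_cast hx
    exact (smul_eq_zero.mp h1).resolve_left hpx
  -- the block matrices
  set Bm : X → Matrix A A ℂ := fun x => matPow (lam x) (-2⁻¹) with hBm
  have hBm_herm : ∀ x, (Bm x).IsHermitian := fun x => matPow_isHermitian (hlam x).1 _
  set N : X → Matrix A A ℂ := fun x => Bm x * κ x * Bm x with hN
  have hN_psd : ∀ x, (N x).PosSemidef := by
    intro x
    have h := ((hκ x).1).conjTranspose_mul_mul_same (Bm x)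
    rwa [(hBm_herm x).eq] at h
  set c : X → ℝ := fun x => q x ^ (-2⁻¹ : ℝ) * p x * q x ^ (-2⁻¹ : ℝ) with hc
  have hc_nonneg : ∀ x, 0 ≤ c x := fun x =>
    mul_nonneg (mul_nonneg (Real.rpow_nonneg (hq x) _) (hp.1 x)) (Real.rpow_nonneg (hq x) _)
  set T : X → ℝ := fun x => ((lam x * matPow (N x) α).trace).re with hT
  have hT_eq : ∀ x, (lam x * matPow (N x) α).trace = ((T x : ℝ) : ℂ) ∧ 0 ≤ T x := by
    intro x
    have h := trace_mul_psd_nonneg (hlam x) (matPow_posSemidef (hN_psd x) α)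
    have h2 := Complex.nonneg_iff.mp h
    constructor
    · apply Complex.ext
      · simp [hT]
      · simp [hT, ← h2.2]
    · exact h2.1
  -- block computations
  have step1 : matPow (cqOp q lam) (-2⁻¹)
      = bd (fun x => ((q x ^ (-2⁻¹ : ℝ) : ℝ) : ℂ) • Bm x) := by
    rw [cqOp_eq_bd, matPow_bd (fun x => (posSemidef_smul (hlam x) (hq x)).1)]
    exact bd_congr fun x => matPow_smul (hlam x) (hq x) _
  have hsmul3 : ∀ (a b : ℂ) (M K : Matrix A A ℂ),
      (a • M) * (b • K) * (a • M) = (a * b * a) • (M * K * M) := by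
    intro a b M K
    rw [Matrix.smul_mul, Matrix.mul_smul, Matrix.smul_mul, Matrix.mul_smul, Matrix.smul_mul,
      smul_smul, smul_smul]
    ring_nf
  have step2 : matPow (cqOp q lam) (-2⁻¹) * cqOp p κ * matPow (cqOp q lam) (-2⁻¹)
      = bd (fun x => ((c x : ℝ) : ℂ) • N x) := by
    rw [step1, cqOp_eq_bd p κ, bd_mul, bd_mul]
    refine bd_congr fun x => ?_
    rw [hsmul3]
    congr 1
    simp only [hc, Complex.ofReal_mul]
  have step3 : matPow (matPow (cqOp q lam) (-2⁻¹) * cqOp p κ * matPow (cqOp q lam) (-2⁻¹)) α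
      = bd (fun x => ((c x ^ α : ℝ) : ℂ) • matPow (N x) α) := by
    rw [step2, matPow_bd (fun x => (posSemidef_smul (hN_psd x) (hc_nonneg x)).1)]
    exact bd_congr fun x => matPow_smul (hN_psd x) (hc_nonneg x) α
  set total : ℝ := ∑ x, q x * c x ^ α * T x with htotal
  have htr : ((cqOp q lam * matPow (matPow (cqOp q lam) (-2⁻¹) * cqOp p κ
      * matPow (cqOp q lam) (-2⁻¹)) α).trace).re = total := by
    rw [step3, cqOp_eq_bd, bd_mul, bd_trace]
    have : ∀ x : X, (((q x : ℂ) • lam x) * (((c x ^ α : ℝ) : ℂ) • matPow (N x) α)).trace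
        = ((q x * c x ^ α * T x : ℝ) : ℂ) := by
      intro x
      rw [Matrix.smul_mul, Matrix.mul_smul, smul_smul, Matrix.trace_smul, (hT_eq x).1,
        smul_eq_mul]
      push_cast
      ring
    rw [Finset.sum_congr rfl (fun x _ => this x), ← Complex.ofReal_sum]
    simp [htotal]
  -- positivity case split
  by_cases hT0 : ∀ x, p x ≠ 0 → T x ≠ 0
  case neg =>
    -- RHS is ⊥
    push_neg at hT0
    obtain ⟨x0, hx0, hTx0⟩ := hT0
    have hterm : (p x0 : EReal) * geomRenyi α (κ x0) (lam x0) = ⊥ := by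
      rw [geomRenyi, if_pos (Or.inr ⟨hα, hsub x0 hx0⟩)]
      have : elog2 (((lam x0 * matPow (matPow (lam x0) (-2⁻¹) * κ x0
          * matPow (lam x0) (-2⁻¹)) α).trace).re) = ⊥ := by
        rw [show matPow (lam x0) (-2⁻¹) * κ x0 * matPow (lam x0) (-2⁻¹) = N x0 from rfl]
        rw [show ((lam x0 * matPow (N x0) α).trace).re = T x0 from rfl, hTx0]
        rw [elog2, if_pos le_rfl]
      rw [this, EReal.coe_mul_bot_of_pos (by positivity), EReal.coe_mul_bot_of_pos]
      exact lt_of_le_of_ne (hp.1 x0) (Ne.symm hx0)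
    have hsum : ∑ x, (p x : EReal) * geomRenyi α (κ x) (lam x) = ⊥ := by
      rw [← Finset.add_sum_erase _ _ (Finset.mem_univ x0), hterm, EReal.bot_add]
    rw [hsum, EReal.add_bot]
    exact bot_le
  case pos =>
  have hTpos : ∀ x, p x ≠ 0 → 0 < T x := fun x hx =>
    lt_of_le_of_ne (hT_eq x).2 (Ne.symm (hT0 x hx))
  set a : X → ℝ := fun x => (p x / q x) ^ (α - 1) * T x with ha
  have ha_nonneg : ∀ x, 0 ≤ a x := fun x =>
    mul_nonneg (Real.rpow_nonneg (div_nonneg (hp.1 x) (hq x)) _) (hT_eq x).2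
  have hkey : ∀ x, q x * c x ^ α * T x = p x * a x := by
    intro x
    rcases eq_or_ne (q x) 0 with hq0 | hq0
    · have hp0 : p x = 0 := by
        by_contra hp0
        exact hpq x hp0 hq0
      have hc0 : c x = 0 := by
        simp [hc, hq0, Real.zero_rpow (by norm_num : (-2⁻¹ : ℝ) ≠ 0)]
      rw [hq0, hp0, hc0]
      ring
    · have hqpos : 0 < q x := lt_of_le_of_ne (hq x) (Ne.symm hq0)
      have hcx : c x = p x / q x := by
        simp only [hc]
        rw [show q x ^ (-2⁻¹ : ℝ) * p x * q x ^ (-2⁻¹ : ℝ)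
            = p x * (q x ^ (-2⁻¹ : ℝ) * q x ^ (-2⁻¹ : ℝ)) by ring]
        rw [← Real.rpow_add hqpos]
        norm_num
        rw [Real.rpow_neg_one]
        ring
      rcases eq_or_ne (p x) 0 with hp0 | hp0
      · rw [hcx, hp0]
        simp [Real.zero_rpow hαne]
      · have hppos : 0 < p x := lt_of_le_of_ne (hp.1 x) (Ne.symm hp0)
        have hdpos : 0 < p x / q x := div_pos hppos hqpos
        rw [hcx, ha]
        have hsplit : (p x / q x) ^ α = (p x / q x) ^ (α - 1) * (p x / q x) := by
          nth_rewrite 1 [show α = (α - 1) + 1 by ring]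
          rw [Real.rpow_add hdpos, Real.rpow_one]
        rw [hsplit]
        field_simp
  have htotal_eq : total = ∑ x, p x * a x := Finset.sum_congr rfl fun x _ => hkey x
  -- Jensen / AM-GM
  have hjensen := Real.geom_mean_le_arith_mean_weighted Finset.univ p a
    (fun i _ => hp.1 i) hp.2 (fun i _ => ha_nonneg i)
  have hprod_pos : 0 < ∏ x, a x ^ p x := by
    apply Finset.prod_pos
    intro x _
    rcases eq_or_ne (p x) 0 with hp0 | hp0
    · rw [hp0, Real.rpow_zero]; norm_num
    · have hax : 0 < a x := by
        apply mul_pos _ (hTpos x hp0)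
        apply Real.rpow_pos_of_pos
        exact div_pos (lt_of_le_of_ne (hp.1 x) (Ne.symm hp0))
          (lt_of_le_of_ne (hq x) (Ne.symm (hpq x hp0)))
      exact Real.rpow_pos_of_pos hax _
  have htotal_pos : 0 < total := by
    rw [htotal_eq]
    exact lt_of_lt_of_le hprod_pos hjensen
  -- logarithms
  have hlog2pos : (0:ℝ) < Real.log 2 := Real.log_pos (by norm_num)
  have hlog_prod : Real.logb 2 (∏ x, a x ^ p x) = ∑ x, p x * Real.logb 2 (a x) := by
    rw [Real.logb, Real.log_prod]
    · rw [Finset.sum_div]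
      refine Finset.sum_congr rfl fun x _ => ?_
      rcases eq_or_ne (p x) 0 with hp0 | hp0
      · simp [hp0]
      · have hax : 0 < a x := by
          apply mul_pos _ (hTpos x hp0)
          exact Real.rpow_pos_of_pos (div_pos (lt_of_le_of_ne (hp.1 x) (Ne.symm hp0))
            (lt_of_le_of_ne (hq x) (Ne.symm (hpq x hp0)))) _
        rw [Real.log_rpow hax, Real.logb, mul_div_assoc]
    · intro x _
      rcases eq_or_ne (p x) 0 with hp0 | hp0
      · rw [hp0, Real.rpow_zero]; norm_num
      · have hax : 0 < a x := by
          apply mul_pos _ (hTpos x hp0)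
          exact Real.rpow_pos_of_pos (div_pos (lt_of_le_of_ne (hp.1 x) (Ne.symm hp0))
            (lt_of_le_of_ne (hq x) (Ne.symm (hpq x hp0)))) _
        exact ne_of_gt (Real.rpow_pos_of_pos hax _)
  have hlogb_a : ∀ x, p x ≠ 0 →
      Real.logb 2 (a x) = (α - 1) * Real.logb 2 (p x / q x) + Real.logb 2 (T x) := by
    intro x hp0
    have hdpos : 0 < p x / q x := div_pos (lt_of_le_of_ne (hp.1 x) (Ne.symm hp0))
      (lt_of_le_of_ne (hq x) (Ne.symm (hpq x hp0)))
    have h1 : ((p x / q x) ^ (α - 1) : ℝ) ≠ 0 := ne_of_gt (Real.rpow_pos_of_pos hdpos _)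
    rw [ha]
    rw [Real.logb_mul h1 (ne_of_gt (hTpos x hp0))]
    congr 1
    rw [Real.logb, Real.logb, Real.log_rpow hdpos, mul_div_assoc]
  -- the real inequality
  set D : ℝ := ∑ x, p x * Real.logb 2 (p x / q x) with hD
  set S : ℝ := ∑ x, p x * Real.logb 2 (T x) with hS
  have hsum_split : ∑ x, p x * Real.logb 2 (a x) = (α - 1) * D + S := by
    rw [hD, hS, Finset.mul_sum, ← Finset.sum_add_distrib]
    refine Finset.sum_congr rfl fun x _ => ?_
    rcases eq_or_ne (p x) 0 with hp0 | hp0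
    · rw [hp0]; ring
    · rw [hlogb_a x hp0]; ring
  have hlog_ineq : (α - 1) * D + S ≤ Real.logb 2 total := by
    rw [← hsum_split, ← hlog_prod]
    apply Real.logb_le_logb_of_le (by norm_num) hprod_pos
    rw [htotal_eq]
    exact hjensen
  have hreal : D + ∑ x, p x * ((α - 1)⁻¹ * Real.logb 2 (T x))
      ≤ (α - 1)⁻¹ * Real.logb 2 total := by
    have h2 : ∑ x, p x * ((α - 1)⁻¹ * Real.logb 2 (T x)) = (α - 1)⁻¹ * S := by
      rw [hS, Finset.mul_sum]
      exact Finset.sum_congr rfl fun x _ => by ring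
    rw [h2]
    have h3 := mul_le_mul_of_nonneg_left hlog_ineq (le_of_lt (inv_pos.mpr hα1))
    calc D + (α - 1)⁻¹ * S = (α - 1)⁻¹ * ((α - 1) * D + S) := by
          field_simp
        _ ≤ (α - 1)⁻¹ * Real.logb 2 total := h3
  -- EReal assembly
  have hLHS : geomRenyi α (cqOp p κ) (cqOp q lam)
      = (((α - 1)⁻¹ * Real.logb 2 total : ℝ) : EReal) := by
    rw [geomRenyi, if_pos (Or.inr ⟨hα, hsupp⟩), htr, elog2,
      if_neg (not_le.mpr htotal_pos), ← EReal.coe_mul]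
  have hterm : ∀ x, (p x : EReal) * geomRenyi α (κ x) (lam x)
      = ((p x * ((α - 1)⁻¹ * Real.logb 2 (T x)) : ℝ) : EReal) := by
    intro x
    rcases eq_or_ne (p x) 0 with hp0 | hp0
    · rw [hp0]
      simp [EReal.zero_mul]
    · rw [geomRenyi, if_pos (Or.inr ⟨hα, hsub x hp0⟩)]
      rw [show matPow (lam x) (-2⁻¹) * κ x * matPow (lam x) (-2⁻¹) = N x from rfl]
      rw [show ((lam x * matPow (N x) α).trace).re = T x from rfl]
      rw [elog2, if_neg (not_le.mpr (hTpos x hp0)), ← EReal.coe_mul, ← EReal.coe_mul]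
  have hsum2 : ∑ x, (p x : EReal) * geomRenyi α (κ x) (lam x)
      = ((∑ x, p x * ((α - 1)⁻¹ * Real.logb 2 (T x)) : ℝ) : EReal) := by
    rw [Finset.sum_congr rfl (fun x _ => hterm x)]
    exact (map_sum (⟨⟨Real.toEReal, EReal.coe_zero⟩, EReal.coe_add⟩ : ℝ →+ EReal) _ _).symm
  have hcRel : cRelEnt p q = ((D : ℝ) : EReal) := by
    rw [cRelEnt, if_pos hpq, hD]
  rw [hLHS, hsum2, hcRel, ← EReal.coe_add]
  exact EReal.coe_le_coe_iff.mpr hreal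



end RainsPaper
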